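/- Combining the two previous identities: the function ψ_L(n, t) defined by the Fourier integral representation satisfies the symmetry relation (t − n) ψ_L(−n, t) = (−1)^n (t + n) ψ_L(n, t) for all integers n and positive integers t with n ≡ t (mod 2). -/

import Mathlib

open Real

noncomputable def ω (θ : ℝ) : ℝ := Real.arcsin (Real.sin θ / Real.sqrt 2)

noncomputable def ψL (n : ℤ) (t : ℕ) : ℂ :=
  (1 / (2 * π)) * ∫ θ in (-π)..π,
    (1 + ((Real.cos θ / Real.sqrt (1 + Real.cos θ ^ 2) : ℝ) : ℂ)) *
      Complex.exp (-Complex.I * ((t : ℂ) * (ω θ : ℂ) + (n : ℂ) * (θ : ℂ)))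

namespace S12
noncomputable def cc (θ : ℝ) : ℝ := Real.cos θ / Real.sqrt (1 + Real.cos θ ^ 2)

lemma sq_lt (θ : ℝ) : (Real.sin θ / Real.sqrt 2) ^ 2 < 1 := by
  rw [div_pow, Real.sq_sqrt (by norm_num : (0:ℝ) ≤ 2)]
  nlinarith [Real.sin_sq_le_one θ]

lemma ne_neg_one (θ : ℝ) : Real.sin θ / Real.sqrt 2 ≠ -1 := by
  intro h; have := sq_lt θ; rw [h] at this; norm_num at this

lemma ne_one (θ : ℝ) : Real.sin θ / Real.sqrt 2 ≠ 1 := by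
  intro h; have := sq_lt θ; rw [h] at this; norm_num at this

lemma omega_deriv (θ : ℝ) : HasDerivAt ω (cc θ) θ := by
  have hs : HasDerivAt (fun x => Real.sin x / Real.sqrt 2) (Real.cos θ / Real.sqrt 2) θ :=
    (Real.hasDerivAt_sin θ).div_const _
  have h := (Real.hasDerivAt_arcsin (ne_neg_one θ) (ne_one θ)).comp θ hs
  refine h.congr_deriv ?_
  have h1 : 1 - (Real.sin θ / Real.sqrt 2) ^ 2 = (1 + Real.cos θ ^ 2) / 2 := by
    rw [div_pow, Real.sq_sqrt (by norm_num : (0:ℝ) ≤ 2)]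
    nlinarith [Real.sin_sq_add_cos_sq θ]
  rw [h1, Real.sqrt_div (by positivity : (0:ℝ) ≤ 1 + Real.cos θ ^ 2) 2, cc]
  have h2 : Real.sqrt (1 + Real.cos θ ^ 2) ≠ 0 := by positivity
  have h3 : Real.sqrt 2 ≠ 0 := by positivity
  field_simp

noncomputable def F (t : ℕ) (n : ℤ) (θ : ℝ) : ℂ :=
  Complex.exp (-Complex.I * ((t : ℂ) * (ω θ : ℂ) + (n : ℂ) * (θ : ℂ)))

lemma cont_omega : Continuous ω :=
  Real.continuous_arcsin.comp (Real.continuous_sin.div_const _)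

lemma cont_cc : Continuous cc := by
  apply Real.continuous_cos.div (by fun_prop)
  intro θ; positivity

lemma cont_F (t : ℕ) (n : ℤ) : Continuous (F t n) := by
  apply Complex.continuous_exp.comp
  have := cont_omega
  fun_prop

lemma F_deriv (t : ℕ) (n : ℤ) (θ : ℝ) :
    HasDerivAt (F t n) (-Complex.I * ((t : ℂ) * (cc θ : ℂ) + (n : ℂ)) * F t n θ) θ := by
  have h1 : HasDerivAt (fun x : ℝ => ((ω x : ℝ) : ℂ)) ((cc θ : ℝ) : ℂ) θ :=
    (omega_deriv θ).ofReal_comp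
  have h2 : HasDerivAt (fun x : ℝ => ((x : ℝ) : ℂ)) ((1 : ℝ) : ℂ) θ :=
    (hasDerivAt_id θ).ofReal_comp
  have h3 : HasDerivAt
      (fun x : ℝ => -Complex.I * ((t : ℂ) * (ω x : ℂ) + (n : ℂ) * (x : ℂ)))
      (-Complex.I * ((t : ℂ) * (cc θ : ℂ) + (n : ℂ) * ((1:ℝ) : ℂ))) θ :=
    ((h1.const_mul ((t : ℕ) : ℂ)).add (h2.const_mul ((n : ℤ) : ℂ))).const_mul _
  have h4 := h3.cexp
  refine h4.congr_deriv ?_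
  simp only [F, Complex.ofReal_one, mul_one]
  ring

lemma exp_int_pi (m : ℤ) : Complex.exp ((m : ℂ) * (Real.pi * Complex.I)) = (-1 : ℂ) ^ m := by
  rw [Complex.exp_int_mul, Complex.exp_pi_mul_I]

lemma neg_one_zpow_mul_self (m : ℤ) : (-1 : ℂ) ^ m * (-1 : ℂ) ^ m = 1 := by
  rw [← zpow_add₀ (by norm_num : (-1 : ℂ) ≠ 0), ← two_mul, zpow_mul]
  norm_num

lemma neg_one_zpow_neg (m : ℤ) : (-1 : ℂ) ^ (-m) = (-1 : ℂ) ^ m := by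
  rw [zpow_neg]
  exact inv_eq_of_mul_eq_one_left (neg_one_zpow_mul_self m)

lemma omega_pi : ω Real.pi = 0 := by simp [ω]

lemma omega_neg_pi : ω (-Real.pi) = 0 := by simp [ω]

lemma ibp (t : ℕ) (n : ℤ) :
    (t : ℂ) * (∫ θ in (-Real.pi)..Real.pi, (cc θ : ℂ) * F t n θ)
      + (n : ℂ) * (∫ θ in (-Real.pi)..Real.pi, F t n θ) = 0 := by
  have key : ∫ θ in (-Real.pi)..Real.pi,
      (-Complex.I * ((t : ℂ) * (cc θ : ℂ) + (n : ℂ)) * F t n θ) = F t n Real.pi - F t n (-Real.pi) := by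
    apply intervalIntegral.integral_eq_sub_of_hasDerivAt (fun θ _ => F_deriv t n θ)
    apply Continuous.intervalIntegrable
    have := cont_cc
    have := cont_F t n
    fun_prop
  have hend : F t n Real.pi = F t n (-Real.pi) := by
    rw [F, F, omega_pi, omega_neg_pi]
    have e1 : -Complex.I * ((t : ℂ) * ((0:ℝ) : ℂ) + (n : ℂ) * ((Real.pi : ℝ) : ℂ))
        = ((-n : ℤ) : ℂ) * (Real.pi * Complex.I) := by push_cast; ring
    have e2 : -Complex.I * ((t : ℂ) * ((0:ℝ) : ℂ) + (n : ℂ) * ((-Real.pi : ℝ) : ℂ))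
        = ((n : ℤ) : ℂ) * (Real.pi * Complex.I) := by push_cast; ring
    rw [e1, e2, exp_int_pi, exp_int_pi, neg_one_zpow_neg]
  rw [hend, sub_self] at key
  have split : ∫ θ in (-Real.pi)..Real.pi,
      (-Complex.I * ((t : ℂ) * (cc θ : ℂ) + (n : ℂ)) * F t n θ)
      = -Complex.I * ((t : ℂ) * (∫ θ in (-Real.pi)..Real.pi, (cc θ : ℂ) * F t n θ)
        + (n : ℂ) * (∫ θ in (-Real.pi)..Real.pi, F t n θ)) := by
    have i1 : IntervalIntegrable (fun θ => (cc θ : ℂ) * F t n θ)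
        MeasureTheory.volume (-Real.pi) Real.pi := by
      apply Continuous.intervalIntegrable
      have := cont_cc; have := cont_F t n; fun_prop
    have i2 : IntervalIntegrable (F t n) MeasureTheory.volume (-Real.pi) Real.pi :=
      (cont_F t n).intervalIntegrable _ _
    calc ∫ θ in (-Real.pi)..Real.pi, (-Complex.I * ((t : ℂ) * (cc θ : ℂ) + (n : ℂ)) * F t n θ)
        = ∫ θ in (-Real.pi)..Real.pi,
            -Complex.I * ((t : ℂ) * ((cc θ : ℂ) * F t n θ) + (n : ℂ) * F t n θ) := by
          apply intervalIntegral.integral_congr; intro θ _; ring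
      _ = -Complex.I * ∫ θ in (-Real.pi)..Real.pi,
            ((t : ℂ) * ((cc θ : ℂ) * F t n θ) + (n : ℂ) * F t n θ) :=
          intervalIntegral.integral_const_mul _ _
      _ = _ := by
          rw [intervalIntegral.integral_add (i1.const_mul _) (i2.const_mul _),
            intervalIntegral.integral_const_mul, intervalIntegral.integral_const_mul]
  rw [split] at key
  have hI : (-Complex.I : ℂ) ≠ 0 := by simp [Complex.I_ne_zero]
  exact (mul_eq_zero.mp key).resolve_left hI

lemma cc_pi_sub (θ : ℝ) : cc (Real.pi - θ) = -cc θ := by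
  rw [cc, cc, Real.cos_pi_sub]
  rw [neg_pow, neg_one_sq, one_mul, neg_div]

lemma omega_pi_sub (θ : ℝ) : ω (Real.pi - θ) = ω θ := by
  rw [ω, ω, Real.sin_pi_sub]

lemma omega_per (θ : ℝ) : ω (θ + 2 * Real.pi) = ω θ := by
  rw [ω, ω, Real.sin_add_two_pi]

lemma F_pi_sub (t : ℕ) (n : ℤ) (θ : ℝ) :
    F t n (Real.pi - θ) = (-1 : ℂ) ^ n * F t (-n) θ := by
  rw [F, F, omega_pi_sub]
  have e : -Complex.I * ((t : ℂ) * ((ω θ : ℝ) : ℂ) + (n : ℂ) * ((Real.pi - θ : ℝ) : ℂ))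
      = -Complex.I * ((t : ℂ) * ((ω θ : ℝ) : ℂ) + ((-n : ℤ) : ℂ) * (θ : ℂ))
        + ((-n : ℤ) : ℂ) * (Real.pi * Complex.I) := by push_cast; ring
  rw [e, Complex.exp_add, exp_int_pi, neg_one_zpow_neg]
  push_cast
  ring

lemma F_per (t : ℕ) (n : ℤ) (θ : ℝ) : F t n (θ + 2 * Real.pi) = F t n θ := by
  rw [F, F, omega_per]
  have e : -Complex.I * ((t : ℂ) * ((ω θ : ℝ) : ℂ) + (n : ℂ) * ((θ + 2 * Real.pi : ℝ) : ℂ))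
      = -Complex.I * ((t : ℂ) * ((ω θ : ℝ) : ℂ) + (n : ℂ) * (θ : ℂ))
        + ((-n : ℤ) : ℂ) * (2 * Real.pi * Complex.I) := by push_cast; ring
  rw [e, Complex.exp_add, Complex.exp_int_mul_two_pi_mul_I, mul_one]

lemma reflect (t : ℕ) (n : ℤ) :
    (∫ θ in (-Real.pi)..Real.pi, (1 + (cc θ : ℂ)) * F t n θ)
      = (-1 : ℂ) ^ n * ∫ θ in (-Real.pi)..Real.pi, (1 - (cc θ : ℂ)) * F t (-n) θ := by
  set g : ℝ → ℂ := fun θ => (1 + (cc θ : ℂ)) * F t n θ with hg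
  have hper : Function.Periodic g (2 * Real.pi) := by
    intro θ
    simp only [hg, F_per, cc]
    rw [Real.cos_add_two_pi]
  have step1 : (∫ θ in (-Real.pi)..Real.pi, g θ) = ∫ θ in (0:ℝ)..(2*Real.pi), g θ := by
    have h := hper.intervalIntegral_add_eq (-Real.pi) 0
    rw [show -Real.pi + 2 * Real.pi = Real.pi by ring, zero_add] at h
    exact h
  have step2 : (∫ θ in (0:ℝ)..(2*Real.pi), g θ)
      = ∫ θ in (-Real.pi)..Real.pi, g (Real.pi - θ) := by
    rw [intervalIntegral.integral_comp_sub_left g Real.pi]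
    norm_num
    rw [two_mul]
  have step3 : ∀ θ : ℝ, g (Real.pi - θ)
      = (-1 : ℂ) ^ n * ((1 - (cc θ : ℂ)) * F t (-n) θ) := by
    intro θ
    simp only [hg, cc_pi_sub, F_pi_sub]
    push_cast
    ring
  rw [step1, step2]
  rw [intervalIntegral.integral_congr (fun θ _ => step3 θ),
    intervalIntegral.integral_const_mul]

lemma int1 (t : ℕ) (m : ℤ) : IntervalIntegrable (fun θ => (cc θ : ℂ) * F t m θ)
    MeasureTheory.volume (-Real.pi) Real.pi := by
  apply Continuous.intervalIntegrable
  have := cont_cc; have := cont_F t m; fun_prop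

lemma int2 (t : ℕ) (m : ℤ) : IntervalIntegrable (F t m)
    MeasureTheory.volume (-Real.pi) Real.pi :=
  (cont_F t m).intervalIntegrable _ _

lemma split_add (t : ℕ) (m : ℤ) :
    (∫ θ in (-Real.pi)..Real.pi, (1 + (cc θ : ℂ)) * F t m θ)
      = (∫ θ in (-Real.pi)..Real.pi, F t m θ)
        + ∫ θ in (-Real.pi)..Real.pi, (cc θ : ℂ) * F t m θ := by
  rw [← intervalIntegral.integral_add (int2 t m) (int1 t m)]
  apply intervalIntegral.integral_congr; intro θ _; ring

lemma split_sub (t : ℕ) (m : ℤ) :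
    (∫ θ in (-Real.pi)..Real.pi, (1 - (cc θ : ℂ)) * F t m θ)
      = (∫ θ in (-Real.pi)..Real.pi, F t m θ)
        - ∫ θ in (-Real.pi)..Real.pi, (cc θ : ℂ) * F t m θ := by
  rw [← intervalIntegral.integral_sub (int2 t m) (int1 t m)]
  apply intervalIntegral.integral_congr; intro θ _; ring

lemma psiL_eq (m : ℤ) (t : ℕ) :
    ψL m t = (1 / (2 * (Real.pi : ℂ)))
      * ∫ θ in (-Real.pi)..Real.pi, (1 + (cc θ : ℂ)) * F t m θ := rfl

end S12

open S12 in
theorem stmt_12 (n : ℤ) (t : ℕ) (ht : 0 < t) (hpar : n ≡ (t : ℤ) [ZMOD 2]) :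
    ((t : ℂ) - (n : ℂ)) * ψL (-n) t = (-1 : ℂ) ^ n * ((t : ℂ) + (n : ℂ)) * ψL n t := by
  have h1 := ibp t (-n)
  have h2 := reflect t n
  rw [split_sub] at h2
  have h3 := split_add t (-n)
  rw [psiL_eq, psiL_eq, h2, h3]
  push_cast at h1 ⊢
  have he := neg_one_zpow_mul_self n
  set a := ∫ θ in (-Real.pi)..Real.pi, F t (-n) θ
  set b := ∫ θ in (-Real.pi)..Real.pi, (cc θ : ℂ) * F t (-n) θ
  have hpi : (Real.pi : ℂ) ≠ 0 := by
    exact_mod_cast Real.pi_ne_zero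
  field_simp
  linear_combination 2 * h1 - ((t : ℂ) + (n : ℂ)) * (a - b) * he
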